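/- Let d2 = (3n+m−2)/(4(n+m−1)) and assume either d2 < d ≤ r or r ≤ d < d2. Then n − m + 2 ≠ 0; set λ = (n − (n+m−1)d)/(n−m+2) (equivalently λ = (r−d)/(2r−1+ρ)). Then 0 ≤ λ ≤ 1/4, and the quadruple y_n = (n−1)λ − b̄_n, y_{n+m} = 2b_m + 2a_{n+m} − b̄_n − (2m−n+1)λ, y_1 = 0, y_{n+1} = b_m + 2a_{n+m} − b̄_n − (m−n+2)λ is such that (λ, y) is a solution of the four-variable system (S); in particular λ = (r−d)/(2r−1+ρ) is an eigenvalue of (S). -/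

import Mathlib

open Finset

/-- The four-variable system (S), with variables `y1 = y_1`, `yn = y_n`,
`yn1 = y_{n+1}`, `ynm = y_{n+m}`. -/
def Ssol (n m : ℕ) (a : ℕ → ℝ) (lam y1 yn yn1 ynm : ℝ) : Prop :=
  yn = min ((1 - (a n + a (n + m))) - 2 * lam + y1 + yn1 - ynm)
      ((∑ i ∈ Finset.Icc 1 (n - 1), a i) - ((n : ℝ) - 1) * lam + y1) ∧
  ynm = min ((1 - (a n + a (n + m))) - lam + y1 + yn1 - yn)
      ((∑ i ∈ Finset.Icc (n + 1) (n + m - 1), a i) - ((m : ℝ) - 1) * lam + yn1) ∧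
  y1 = min (a n - lam + (yn + ynm) / 2)
      ((∑ i ∈ Finset.Icc 1 (n - 1), (1 - a i)) - ((n : ℝ) - 1) * lam + yn) ∧
  yn1 = min (a (n + m) - lam + (yn + ynm) / 2)
      ((∑ i ∈ Finset.Icc (n + 1) (n + m - 1), (1 - a i)) - ((m : ℝ) - 1) * lam + ynm)

theorem stmt8 (n m : ℕ) (hn : 2 ≤ n) (hm : 2 ≤ m) (a : ℕ → ℝ)
    (ha : ∀ i : ℕ, 1 ≤ i → i ≤ n + m → 0 ≤ a i ∧ a i ≤ 1)
    (hprio : a n + a (n + m) ≤ 1)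
    (d r d2 : ℝ) (hd : d = (∑ i ∈ Finset.Icc 1 (n + m), a i) / ((n : ℝ) + (m : ℝ) - 1))
    (hr : r = (n : ℝ) / ((n : ℝ) + (m : ℝ) - 1))
    (hd2 : d2 = (3 * (n : ℝ) + (m : ℝ) - 2) / (4 * ((n : ℝ) + (m : ℝ) - 1)))
    (hcase : (d2 < d ∧ d ≤ r) ∨ (r ≤ d ∧ d < d2))
    (lam : ℝ) (hlam : lam = ((n : ℝ) - ((n : ℝ) + (m : ℝ) - 1) * d) / ((n : ℝ) - (m : ℝ) + 2)) :
    (n : ℝ) - (m : ℝ) + 2 ≠ 0 ∧ 0 ≤ lam ∧ lam ≤ 1 / 4 ∧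
    Ssol n m a lam 0
      (((n : ℝ) - 1) * lam - (∑ i ∈ Finset.Icc 1 (n - 1), (1 - a i)))
      ((∑ i ∈ Finset.Icc (n + 1) (n + m - 1), a i) + 2 * a (n + m)
        - (∑ i ∈ Finset.Icc 1 (n - 1), (1 - a i)) - ((m : ℝ) - (n : ℝ) + 2) * lam)
      (2 * (∑ i ∈ Finset.Icc (n + 1) (n + m - 1), a i) + 2 * a (n + m)
        - (∑ i ∈ Finset.Icc 1 (n - 1), (1 - a i)) - (2 * (m : ℝ) - (n : ℝ) + 1) * lam) := by
  have hnR : (2:ℝ) ≤ (n:ℝ) := by exact_mod_cast hn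
  have hmR : (2:ℝ) ≤ (m:ℝ) := by exact_mod_cast hm
  have hNpos : (0:ℝ) < (n:ℝ) + (m:ℝ) - 1 := by linarith
  set Bn := ∑ i ∈ Finset.Icc 1 (n-1), a i with hBn
  set Bm := ∑ i ∈ Finset.Icc (n+1) (n+m-1), a i with hBm
  set S := ∑ i ∈ Finset.Icc 1 (n+m), a i with hS
  clear_value Bn Bm S
  -- splitting of the total sum
  have cIcc : ∀ k, ∑ i ∈ Finset.Icc 1 k, a i = ∑ i ∈ Finset.Ioc 0 k, a i := by
    intro k; rw [← Finset.Icc_add_one_left_eq_Ioc, zero_add]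
  have hsplit : S = Bn + a n + Bm + a (n+m) := by
    have e1 : ∑ i ∈ Finset.Ioc 0 n, a i + ∑ i ∈ Finset.Ioc n (n+m), a i
        = ∑ i ∈ Finset.Ioc 0 (n+m), a i :=
      Finset.sum_Ioc_consecutive _ (by omega) (by omega)
    have e2 : ∑ i ∈ Finset.Icc 1 n, a i = Bn + a n := by
      have h := Finset.sum_Icc_succ_top (a := 1) (b := n - 1) (by omega) a
      rw [show n - 1 + 1 = n from by omega] at h
      rw [h, hBn]
    have e3 : ∑ i ∈ Finset.Ioc n (n+m), a i = Bm + a (n+m) := by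
      have h := Finset.sum_Ioc_succ_top (a := n) (b := n + m - 1) (by omega) a
      rw [show n + m - 1 + 1 = n + m from by omega] at h
      rw [h, hBm, ← Finset.Icc_add_one_left_eq_Ioc]
    rw [hS, cIcc, ← e1, ← cIcc, e2, e3]; ring
  -- complement sums
  have hbarn : (∑ i ∈ Finset.Icc 1 (n-1), (1 - a i)) = ((n:ℝ) - 1) - Bn := by
    rw [Finset.sum_sub_distrib, Finset.sum_const, Nat.card_Icc]
    have h1 : n - 1 + 1 - 1 = n - 1 := by omega
    rw [h1, nsmul_eq_mul, mul_one, Nat.cast_sub (by omega)]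
    push_cast
    rw [hBn]
    try ring
  have hbarm : (∑ i ∈ Finset.Icc (n+1) (n+m-1), (1 - a i)) = ((m:ℝ) - 1) - Bm := by
    rw [Finset.sum_sub_distrib, Finset.sum_const, Nat.card_Icc]
    have h1 : n + m - 1 + 1 - (n + 1) = m - 1 := by omega
    rw [h1, nsmul_eq_mul, mul_one, Nat.cast_sub (by omega)]
    push_cast
    rw [hBm]
    try ring
  -- basic identities
  have hSd : ((n:ℝ) + (m:ℝ) - 1) * d = S := by
    rw [hd]; field_simp
  have hrd : ((n:ℝ) + (m:ℝ) - 1) * r = (n:ℝ) := by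
    rw [hr]; field_simp
  have hd2e : 4 * ((n:ℝ) + (m:ℝ) - 1) * d2 = 3 * (n:ℝ) + (m:ℝ) - 2 := by
    rw [hd2]; field_simp
    try ring
  have hne : (n:ℝ) - (m:ℝ) + 2 ≠ 0 := by
    intro h
    have hrd2 : r = d2 := by
      have h4 : 4 * ((n:ℝ) + (m:ℝ) - 1) * (r - d2) = (n:ℝ) - (m:ℝ) + 2 := by
        rw [mul_sub, hd2e]; linarith [hrd]
      rw [h] at h4
      rcases mul_eq_zero.1 h4 with h5 | h5
      · linarith
      · linarith
    rcases hcase with ⟨h1, h2⟩ | ⟨h1, h2⟩ <;> linarith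
  have hkey : ((n:ℝ) - (m:ℝ) + 2) * lam = (n:ℝ) - S := by
    rw [hlam, mul_div_cancel₀ _ hne, hSd]
  -- bounds on lam
  have hPd2 : 4 * ((n:ℝ) + (m:ℝ) - 1) * (r - d2) = (n:ℝ) - (m:ℝ) + 2 := by
    rw [mul_sub, hd2e]; linarith [hrd]
  have hval : ((n:ℝ) - (m:ℝ) + 2) * lam = ((n:ℝ) + (m:ℝ) - 1) * (r - d) := by
    rw [hkey, mul_sub, hrd, hSd]
  have hlam0 : 0 ≤ lam := by
    rcases hcase with ⟨h1, h2⟩ | ⟨h1, h2⟩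
    · have hP : 0 < (n:ℝ) - (m:ℝ) + 2 := by
        have := mul_pos hNpos (show (0:ℝ) < r - d2 by linarith); linarith [hPd2]
      have h0 : 0 ≤ ((n:ℝ) - (m:ℝ) + 2) * lam := by
        rw [hval]; exact mul_nonneg hNpos.le (by linarith)
      by_contra hc
      push_neg at hc
      linarith [mul_neg_of_pos_of_neg hP hc]
    · have hP : (n:ℝ) - (m:ℝ) + 2 < 0 := by
        have := mul_pos hNpos (show (0:ℝ) < d2 - r by linarith); linarith [hPd2]
      have h0 : ((n:ℝ) - (m:ℝ) + 2) * lam ≤ 0 := by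
        rw [hval]; exact mul_nonpos_of_nonneg_of_nonpos hNpos.le (by linarith)
      by_contra hc
      push_neg at hc
      linarith [mul_pos_of_neg_of_neg hP hc]
  have hlam4 : lam ≤ 1 / 4 := by
    rcases hcase with ⟨h1, h2⟩ | ⟨h1, h2⟩
    · have hP : 0 < (n:ℝ) - (m:ℝ) + 2 := by
        have := mul_pos hNpos (show (0:ℝ) < r - d2 by linarith); linarith [hPd2]
      have hdd : ((n:ℝ) + (m:ℝ) - 1) * d2 < ((n:ℝ) + (m:ℝ) - 1) * d :=
        mul_lt_mul_of_pos_left h1 hNpos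
      have h4 : ((n:ℝ) - (m:ℝ) + 2) * lam < ((n:ℝ) - (m:ℝ) + 2) * (1/4) := by
        linarith [hval, hPd2, hdd]
      exact le_of_lt (lt_of_mul_lt_mul_left h4 hP.le)
    · have hP : (n:ℝ) - (m:ℝ) + 2 < 0 := by
        have := mul_pos hNpos (show (0:ℝ) < d2 - r by linarith); linarith [hPd2]
      have hdd : ((n:ℝ) + (m:ℝ) - 1) * d < ((n:ℝ) + (m:ℝ) - 1) * d2 :=
        mul_lt_mul_of_pos_left h2 hNpos
      by_contra hc
      push_neg at hc
      have h4 : ((n:ℝ) - (m:ℝ) + 2) * lam < ((n:ℝ) - (m:ℝ) + 2) * (1/4) :=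
        mul_lt_mul_of_neg_left hc hP
      linarith [hval, hPd2, hdd]
  -- helpful product facts
  have hnl : 0 ≤ ((n:ℝ) - 1) * (1 - 2 * lam) :=
    mul_nonneg (by linarith) (by linarith)
  have hml : 0 ≤ ((m:ℝ) - 1) * (1 - 2 * lam) :=
    mul_nonneg (by linarith) (by linarith)
  simp only [Ssol]
  rw [hbarn, hbarm]
  refine ⟨hne, hlam0, hlam4, ?_, ?_, ?_, ?_⟩ <;>
    · rw [min_def]; split_ifs with h
      · linarith [hkey, hsplit, hnl, hml, hlam0, hlam4]
      · push_neg at h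
        linarith [hkey, hsplit, hnl, hml, hlam0, hlam4]
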